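/- If an s-WSPD covers all pairs of a finite set P ⊂ ℝ² (every unordered pair of distinct points lies in exactly one well-separated pair), then for any two distinct points p, q ∈ P with representatives p₀ ∈ U, q₀ ∈ V of the pair containing (p,q) and s > 4, one can construct, by induction on distances, a path from p to q in the representative graph WS_s(P) of length at most ((s+4)/(s−4))·‖p−q‖₂, using that ‖p−p₀‖₂ ≤ (2/s)‖p−q‖₂, ‖q−q₀‖₂ ≤ (2/s)‖p−q‖₂, and ‖p₀−q₀‖₂ ≤ (1 + 4/s)‖p−q‖₂. -/

import Mathlib

noncomputable section

abbrev E2 := EuclideanSpace ℝ (Fin 2)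

/-- `U` and `V` are `s`-well separated: each lies in a ball of radius `d` and the two
balls are at distance at least `s·d`. -/
def WellSeparated (s : ℝ) (U V : Set E2) : Prop :=
  ∃ (x y : E2) (d : ℝ), 0 ≤ d ∧ (∀ u ∈ U, dist u x ≤ d) ∧ (∀ v ∈ V, dist v y ≤ d) ∧
    s * d + 2 * d ≤ dist x y

/-- Total weight of a path given as a list of consecutive vertices. -/
def pathCost (w : E2 → E2 → ℝ) : List E2 → ℝ
  | [] => 0
  | [_] => 0
  | p :: q :: t => w p q + pathCost w (q :: t)

/-- `l` is a walk from `p` to `q` along edges of the adjacency relation `Adj`. -/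
def IsWalk (Adj : E2 → E2 → Prop) (p q : E2) (l : List E2) : Prop :=
  l.head? = some p ∧ l.getLast? = some q ∧ l.Chain' Adj

lemma pathCost_append (w : E2 → E2 → ℝ) :
    ∀ (l1 : List E2) (b : E2), l1.getLast? = some b →
      ∀ t, pathCost w (l1 ++ t) = pathCost w l1 + pathCost w (b :: t)
  | [], b, h, t => by simp at h
  | [x], b, h, t => by
      simp at h
      subst h
      cases t <;> simp [pathCost]
  | x :: y :: r, b, h, t => by
      have ih := pathCost_append w (y :: r) b (by simpa using h) t
      show w x y + pathCost w (y :: r ++ t) = (w x y + pathCost w (y :: r)) + pathCost w (b :: t)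
      rw [ih]; ring

lemma isWalk_trans {Adj : E2 → E2 → Prop} {a b c : E2} {l1 l2 : List E2}
    (h1 : IsWalk Adj a b l1) (h2 : IsWalk Adj b c l2) :
    IsWalk Adj a c (l1 ++ l2.tail) ∧
      pathCost dist (l1 ++ l2.tail) = pathCost dist l1 + pathCost dist l2 := by
  obtain ⟨hh1, hl1, hc1⟩ := h1
  obtain ⟨hh2, hl2, hc2⟩ := h2
  obtain ⟨t, rfl⟩ : ∃ t, l2 = b :: t := by
    cases l2 with
    | nil => simp at hh2
    | cons x t => simp at hh2; exact ⟨t, by rw [hh2]⟩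
  have hne1 : l1 ≠ [] := by rintro rfl; simp at hh1
  simp only [List.tail_cons]
  refine ⟨⟨?_, ?_, ?_⟩, ?_⟩
  · rw [List.head?_append, hh1]; rfl
  · cases t with
    | nil => simpa [hl1] using hl2
    | cons y r =>
        rw [List.getLast?_append_cons]
        simpa using hl2
  · replace hc2 := List.isChain_cons.1 hc2
    exact List.IsChain.append hc1 hc2.2 (by
      intro x hx y hy
      rw [hl1] at hx
      cases hx
      exact hc2.1 y hy)
  · exact pathCost_append dist l1 b hl1 t

lemma ws_est {s : ℝ} (hs : 0 < s) {U V : Set E2} (h : WellSeparated s U V)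
    {a a' b b' : E2} (ha : a ∈ U) (ha' : a' ∈ U) (hb : b ∈ V) (hb' : b' ∈ V) :
    dist a a' ≤ 2 / s * dist a b ∧ dist b b' ≤ 2 / s * dist a b ∧
      dist a' b' ≤ (1 + 4 / s) * dist a b := by
  obtain ⟨x, y, d, hd, hU, hV, hxy⟩ := h
  have h1 := hU a ha
  have h2 := hU a' ha'
  have h3 := hV b hb
  have h4 := hV b' hb'
  have hsd : s * d ≤ dist a b := by
    have t4 := dist_triangle4 x a b y
    have c1 : dist x a = dist a x := dist_comm x a
    have c2 : dist b y = dist b y := rfl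
    linarith
  have hd' : d ≤ dist a b / s := by
    rw [le_div_iff₀ hs]; linarith [mul_comm d s]
  constructor
  · have := dist_triangle a x a'
    have : dist a a' ≤ 2 * d := by
      have := dist_triangle a x a'
      have := dist_comm x a'
      linarith [dist_triangle a x a', dist_comm a' x, h2]
    calc dist a a' ≤ 2 * d := this
      _ ≤ 2 * (dist a b / s) := by linarith
      _ = 2 / s * dist a b := by ring
  constructor
  · have : dist b b' ≤ 2 * d := by
      linarith [dist_triangle b y b', dist_comm b' y, h4]
    calc dist b b' ≤ 2 * d := this
      _ ≤ 2 * (dist a b / s) := by linarith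
      _ = 2 / s * dist a b := by ring
  · have haa' : dist a' a ≤ 2 * d := by
      linarith [dist_triangle a' x a, dist_comm a x]
    have hbb' : dist b b' ≤ 2 * d := by
      linarith [dist_triangle b y b', dist_comm b' y]
    have := dist_triangle4 a' a b b'
    calc dist a' b' ≤ 2 * d + dist a b + 2 * d := by linarith
      _ ≤ dist a b + 4 * (dist a b / s) := by linarith
      _ = (1 + 4 / s) * dist a b := by ring

lemma main_walk {ι : Type*} (P : Finset E2) (s : ℝ) (hs : 4 < s)
    (U V : ι → Set E2) (uRep vRep : ι → E2)
    (hUP : ∀ i, U i ⊆ (P : Set E2)) (hVP : ∀ i, V i ⊆ (P : Set E2))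
    (hWS : ∀ i, WellSeparated s (U i) (V i))
    (huRep : ∀ i, uRep i ∈ U i) (hvRep : ∀ i, vRep i ∈ V i)
    (hcover : ∀ p ∈ P, ∀ q ∈ P, p ≠ q →
      ∃! i, (p ∈ U i ∧ q ∈ V i) ∨ (p ∈ V i ∧ q ∈ U i)) :
    ∀ n : ℕ, ∀ p q : E2, p ∈ P → q ∈ P → p ≠ q →
      ((P ×ˢ P).filter (fun x => dist x.1 x.2 < dist p q)).card < n →
      ∃ l : List E2,
        IsWalk (fun x y => ∃ j, (x = uRep j ∧ y = vRep j) ∨ (x = vRep j ∧ y = uRep j))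
          p q l ∧
        pathCost dist l ≤ (s + 4) / (s - 4) * dist p q := by
  have hs0 : (0:ℝ) < s := by linarith
  have hs4 : (0:ℝ) < s - 4 := by linarith
  set t : ℝ := (s + 4) / (s - 4) with ht
  have ht0 : 0 < t := div_pos (by linarith) hs4
  intro n
  induction n with
  | zero => intro p q _ _ _ h; omega
  | succ n IH =>
      intro p q hp hq hpq hcard
      set Adj : E2 → E2 → Prop :=
        fun x y => ∃ j, (x = uRep j ∧ y = vRep j) ∨ (x = vRep j ∧ y = uRep j) with hAdj
      have hD : 0 < dist p q := dist_pos.2 hpq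
      obtain ⟨u, v, huP, hvP, hedge, hbu, hbv, huv⟩ :
          ∃ u v : E2, u ∈ P ∧ v ∈ P ∧ Adj u v ∧ dist p u ≤ 2 / s * dist p q ∧
            dist q v ≤ 2 / s * dist p q ∧ dist u v ≤ (1 + 4 / s) * dist p q := by
        obtain ⟨i, hi, -⟩ := hcover p hp q hq hpq
        rcases hi with ⟨hpU, hqV⟩ | ⟨hpV, hqU⟩
        · obtain ⟨e1, e2, e3⟩ := ws_est hs0 (hWS i) hpU (huRep i) hqV (hvRep i)
          exact ⟨uRep i, vRep i, hUP i (huRep i), hVP i (hvRep i),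
            ⟨i, Or.inl ⟨rfl, rfl⟩⟩, e1, e2, e3⟩
        · obtain ⟨e1, e2, e3⟩ := ws_est hs0 (hWS i) hqU (huRep i) hpV (hvRep i)
          rw [dist_comm q p] at e1 e2 e3
          exact ⟨vRep i, uRep i, hVP i (hvRep i), hUP i (huRep i),
            ⟨i, Or.inr ⟨rfl, rfl⟩⟩, e2, e1, by rwa [dist_comm]⟩
      have hfrac : 2 / s * dist p q < dist p q := by
        have : 2 / s < 1 := by rw [div_lt_one hs0]; linarith
        nlinarith
      -- walk from p to u
      have wpu : ∃ l, IsWalk Adj p u l ∧ pathCost dist l ≤ t * dist p u := by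
        by_cases hpu : p = u
        · subst hpu
          exact ⟨[p], ⟨rfl, rfl, List.isChain_singleton p⟩, by simp [pathCost]⟩
        · have hlt : dist p u < dist p q := lt_of_le_of_lt hbu hfrac
          refine IH p u hp huP hpu ?_
          have hss : (P ×ˢ P).filter (fun x => dist x.1 x.2 < dist p u) ⊂
              (P ×ˢ P).filter (fun x => dist x.1 x.2 < dist p q) := by
            refine Finset.ssubset_iff_of_subset
              (Finset.monotone_filter_right _ (fun x _ hx => lt_trans hx hlt)) |>.2 ?_
            exact ⟨(p, u), by simp [Finset.mem_filter, hp, huP, hlt],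
              by simp [Finset.mem_filter]⟩
          have := Finset.card_lt_card hss
          omega
      -- walk from v to q
      have wvq : ∃ l, IsWalk Adj v q l ∧ pathCost dist l ≤ t * dist v q := by
        by_cases hvq : v = q
        · subst hvq
          exact ⟨[v], ⟨rfl, rfl, List.isChain_singleton v⟩, by simp [pathCost]⟩
        · have hlt : dist v q < dist p q := by rw [dist_comm]; exact lt_of_le_of_lt hbv hfrac
          refine IH v q hvP hq hvq ?_
          have hss : (P ×ˢ P).filter (fun x => dist x.1 x.2 < dist v q) ⊂
              (P ×ˢ P).filter (fun x => dist x.1 x.2 < dist p q) := by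
            refine Finset.ssubset_iff_of_subset
              (Finset.monotone_filter_right _ (fun x _ hx => lt_trans hx hlt)) |>.2 ?_
            exact ⟨(v, q), by simp [Finset.mem_filter, hq, hvP, hlt],
              by simp [Finset.mem_filter]⟩
          have := Finset.card_lt_card hss
          omega
      obtain ⟨l1, hw1, hc1⟩ := wpu
      obtain ⟨l3, hw3, hc3⟩ := wvq
      have hw2 : IsWalk Adj u v [u, v] := ⟨rfl, rfl, List.isChain_pair.2 hedge⟩
      have hc2 : pathCost dist [u, v] = dist u v := by simp [pathCost]
      obtain ⟨hw12, hc12⟩ := isWalk_trans hw1 hw2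
      obtain ⟨hw, hc⟩ := isWalk_trans hw12 hw3
      refine ⟨_, hw, ?_⟩
      rw [hc, hc12, hc2]
      have key : t * (2 / s * dist p q) + (1 + 4 / s) * dist p q + t * (2 / s * dist p q)
          = t * dist p q := by
        have h4ne : s - 4 ≠ 0 := ne_of_gt hs4
        have hsne : s ≠ 0 := ne_of_gt hs0
        rw [ht]
        field_simp
        ring
      have h1 : pathCost dist l1 ≤ t * (2 / s * dist p q) := by
        refine hc1.trans ?_
        exact mul_le_mul_of_nonneg_left hbu ht0.le
      have h3 : pathCost dist l3 ≤ t * (2 / s * dist p q) := by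
        refine hc3.trans ?_
        refine mul_le_mul_of_nonneg_left ?_ ht0.le
        rwa [dist_comm]
      linarith

/-- If an `s`-WSPD covers all pairs of a finite `P ⊆ ℝ²`, `s > 4`, and `p ≠ q` lie in
the well-separated pair `(U i, V i)` with representatives `uRep i`, `vRep i`, then
`‖p - uRep i‖ ≤ (2/s)‖p-q‖`, `‖q - vRep i‖ ≤ (2/s)‖p-q‖`,
`‖uRep i - vRep i‖ ≤ (1+4/s)‖p-q‖`, and there is a path from `p` to `q` in the
representative graph `WS_s(P)` of length at most `((s+4)/(s-4))·‖p-q‖₂`. -/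
theorem wspd_spanner_path {ι : Type*} (P : Finset E2) (s : ℝ) (hs : 4 < s)
    (U V : ι → Set E2) (uRep vRep : ι → E2)
    (hUP : ∀ i, U i ⊆ (P : Set E2)) (hVP : ∀ i, V i ⊆ (P : Set E2))
    (hWS : ∀ i, WellSeparated s (U i) (V i))
    (huRep : ∀ i, uRep i ∈ U i) (hvRep : ∀ i, vRep i ∈ V i)
    (hcover : ∀ p ∈ P, ∀ q ∈ P, p ≠ q →
      ∃! i, (p ∈ U i ∧ q ∈ V i) ∨ (p ∈ V i ∧ q ∈ U i))
    (p q : E2) (hp : p ∈ P) (hq : q ∈ P) (hpq : p ≠ q)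
    (i : ι) (hpU : p ∈ U i) (hqV : q ∈ V i) :
    dist p (uRep i) ≤ 2 / s * dist p q ∧
    dist q (vRep i) ≤ 2 / s * dist p q ∧
    dist (uRep i) (vRep i) ≤ (1 + 4 / s) * dist p q ∧
    ∃ l : List E2,
      IsWalk (fun x y => ∃ j, (x = uRep j ∧ y = vRep j) ∨ (x = vRep j ∧ y = uRep j))
        p q l ∧
      pathCost dist l ≤ (s + 4) / (s - 4) * dist p q := by
  have hs0 : (0:ℝ) < s := by linarith
  obtain ⟨e1, e2, e3⟩ := ws_est hs0 (hWS i) hpU (huRep i) hqV (hvRep i)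
  refine ⟨e1, e2, e3, ?_⟩
  exact main_walk P s hs U V uRep vRep hUP hVP hWS huRep hvRep hcover
    (((P ×ˢ P).filter (fun x => dist x.1 x.2 < dist p q)).card + 1) p q hp hq hpq
    (Nat.lt_succ_self _)
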